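/- For any p ∈ P*, α ∈ C^p, and ν : α → {-1,1} obtained as η^q ↾ α for some q ≥ p (i.e. ν ∈ pos(p, α)), the pair ν *_α p = (ν ⌢ η^p↾[α,λ), C^p ∖ α) is an element of P* and is a condition stronger than p in P*. -/

import Mathlib

open Set

noncomputable section

def IsUltrafilterOn {α : Type*} (Z : Set α) (d : Set (Set α)) : Prop :=
  (∀ A ∈ d, A ⊆ Z) ∧ Z ∈ d ∧ ∅ ∉ d ∧
  (∀ A B : Set α, A ∈ d → A ⊆ B → B ⊆ Z → B ∈ d) ∧
  (∀ A B : Set α, A ∈ d → B ∈ d → A ∩ B ∈ d) ∧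
  (∀ A : Set α, A ⊆ Z → (A ∈ d ∨ Z \ A ∈ d))

def IsNonprincipalOn {α : Type*} (Z : Set α) (d : Set (Set α)) : Prop :=
  IsUltrafilterOn Z d ∧ ∀ x : α, {x} ∉ d

def IsClubIn (C : Set Ordinal) (lam : Ordinal) : Prop :=
  C ⊆ Iio lam ∧ (∀ β < lam, ∃ δ ∈ C, β < δ) ∧
  (∀ β < lam, β ≠ 0 → sSup (C ∩ Iio β) = β → β ∈ C)

def nextIn (C : Set Ordinal) (δ : Ordinal) : Ordinal := sInf (C \ Iic δ)

/-- An element of `Q⁰_λ`: a club `C` of limit ordinals below `λ`, together with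
a non-principal ultrafilter `d δ` on the interval `Z_δ = [δ, min(C ∖ (δ+1)))` for each `δ ∈ C`. -/
structure QZero (lam : Ordinal) where
  C : Set Ordinal
  d : Ordinal → Set (Set Ordinal)
  club : IsClubIn C lam
  limit : ∀ δ ∈ C, Order.IsSuccLimit δ
  ultra : ∀ δ ∈ C, IsNonprincipalOn (Ico δ (nextIn C δ)) (d δ)

def QZero.Z {lam : Ordinal} (p : QZero lam) (δ : Ordinal) : Set Ordinal :=
  Ico δ (nextIn p.C δ)

def fil {lam : Ordinal} (p : QZero lam) : Set (Set Ordinal) :=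
  {A | A ⊆ Iio lam ∧ ∃ ε < lam, ∀ δ ∈ p.C, ε ≤ δ → A ∩ p.Z δ ∈ p.d δ}

def le0 {lam : Ordinal} (p q : QZero lam) : Prop := fil p ⊆ fil q

def filG {lam : Ordinal} (G : Set (QZero lam)) : Set (Set Ordinal) :=
  ⋃ p ∈ G, fil p

/-- A condition in the forcing `P*`: a function `η : λ → {-1, 1}` together with a
club `C` of `λ`. -/
structure PStar (lam : Ordinal) where
  η : Ordinal → ℤ
  C : Set Ordinal
  pm : ∀ α < lam, η α = 1 ∨ η α = -1
  club : IsClubIn C lam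

/-- The order of `P*`: `p ≤ q` iff `C^q ⊆ C^p`, `η^q` agrees with `η^p` below `min C^p`,
and for successive `α < β` in `C^p` and `γ ∈ [α,β)`, `η^q(γ) = (η^p(α)/η^q(α))·η^p(γ)`. -/
def PLe {lam : Ordinal} (p q : PStar lam) : Prop :=
  q.C ⊆ p.C ∧ (∀ γ < sInf p.C, q.η γ = p.η γ) ∧
  ∀ α ∈ p.C, ∀ γ ∈ Ico α (nextIn p.C α), q.η γ = (p.η α / q.η α) * p.η γ

/-- For `p ∈ P*`, `α ∈ C^p` and `ν = η^q ↾ α` for some `q ≥ p` (i.e. `ν ∈ pos(p,α)`),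
the pair `ν *_α p = (ν ⌢ η^p↾[α,λ), C^p ∖ α)` is an element of `P*` stronger than `p`. -/
theorem statement17 (κ : Cardinal.{0}) (hinacc : κ.IsInaccessible)
    (p q : PStar κ.ord) (α : Ordinal) (hα : α ∈ p.C) (hpq : PLe p q) :
    ∃ s : PStar κ.ord,
      (∀ γ : Ordinal, s.η γ = if γ < α then q.η γ else p.η γ) ∧
      s.C = p.C \ Iio α ∧ PLe p s := by
  obtain ⟨hsub, hlow, hblock⟩ := hpq
  have hαlt : α < κ.ord := p.club.1 hα
  -- club property of p.C \ Iio α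
  have hclub : IsClubIn (p.C \ Iio α) κ.ord := by
    refine ⟨fun x hx => p.club.1 hx.1, ?_, ?_⟩
    · intro β hβ
      obtain ⟨δ, hδC, hδgt⟩ := p.club.2.1 (max β α) (max_lt hβ hαlt)
      exact ⟨δ, ⟨hδC, not_lt.2 (le_of_lt (lt_of_le_of_lt (le_max_right _ _) hδgt))⟩,
        lt_of_le_of_lt (le_max_left _ _) hδgt⟩
    · intro β hβ hβ0 hsup
      have hne : ((p.C \ Iio α) ∩ Iio β).Nonempty := by
        by_contra h
        rw [not_nonempty_iff_eq_empty] at h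
        rw [h] at hsup
        simp at hsup
        exact hβ0 hsup.symm
      have hbdd : BddAbove ((p.C \ Iio α) ∩ Iio β) :=
        ⟨β, fun x hx => le_of_lt hx.2⟩
      obtain ⟨δ, hδ⟩ := hne
      have hαβ : α ≤ β := by
        calc α ≤ δ := not_lt.1 hδ.1.2
        _ ≤ sSup ((p.C \ Iio α) ∩ Iio β) := le_csSup hbdd hδ
        _ = β := hsup
      have hβC : β ∈ p.C := by
        apply p.club.2.2 β hβ hβ0
        apply le_antisymm
        · exact csSup_le ⟨δ, hδ.1.1, hδ.2⟩ (fun x hx => le_of_lt hx.2)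
        · calc β = sSup ((p.C \ Iio α) ∩ Iio β) := hsup.symm
          _ ≤ sSup (p.C ∩ Iio β) :=
            csSup_le_csSup ⟨β, fun x hx => le_of_lt hx.2⟩ ⟨δ, hδ⟩
              (fun x hx => ⟨hx.1.1, hx.2⟩)
      exact ⟨hβC, not_lt.2 hαβ⟩
  refine ⟨⟨fun γ => if γ < α then q.η γ else p.η γ, p.C \ Iio α, ?_, hclub⟩,
    fun γ => rfl, rfl, ?_, ?_, ?_⟩
  · intro γ hγ
    by_cases h : γ < α <;> simp only [h, if_pos, if_neg, if_true, if_false]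
    · exact q.pm γ hγ
    · exact p.pm γ hγ
  · exact fun x hx => hx.1
  · intro γ hγ
    have hγα : γ < α := lt_of_lt_of_le hγ (csInf_le (OrderBot.bddBelow _) hα)
    simp only [hγα, if_true]
    exact hlow γ hγ
  · intro β hβ γ hγ
    rcases lt_or_ge β α with hβα | hαβ
    · -- then nextIn p.C β ≤ α, so γ < α and β < α
      have hnext : nextIn p.C β ≤ α :=
        csInf_le (OrderBot.bddBelow _) ⟨hα, not_le.2 hβα⟩
      have hγα : γ < α := lt_of_lt_of_le hγ.2 hnext
      simp only [hγα, hβα, if_true]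
      exact hblock β hβ γ hγ
    · have hγα : ¬ γ < α := not_lt.2 (le_trans hαβ hγ.1)
      have hβα' : ¬ β < α := not_lt.2 hαβ
      simp only [hγα, hβα', if_false]
      rcases p.pm β (p.club.1 hβ) with h | h <;> rw [h] <;> ring_nf <;> simp
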